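/- arXiv:1601.06119 — 2 statements merged into one kernel-verified Lean document; each statement's English description precedes it below -/
import Mathlib

section
/- Let h : BitVec b → BitVec b be injective, k̃ : BitVec b, x a coordinate with |x| < L, x' a padded coordinate of x, and y = hc(k̃, x') the return address generated from x. Then for every coordinate c with cpl(x', c) ≤ |x|, the diversity measure satisfies δ_TD(y, hc(k̃, c)) = δ_TD(x, c) + (L − |x|). Consequently, for every finite nonempty set C of coordinates each satisfying cpl(x', c) ≤ |x|, the set of minimizers of c ↦ δ_TD(y, hc(k̃, c)) over C equals the set of minimizers of c ↦ δ_TD(x, c) over C; i.e., the return address is route preserving with respect to the tree distance δ_TD. -/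
/-- The common prefix length of two lists. -/
def cpl {α : Type*} [DecidableEq α] : List α → List α → ℕ
  | a :: as, b :: bs => if a = b then cpl as bs + 1 else 0
  | _, _ => 0

/-- The tree distance `δ_TD x y = |x| + |y| - 2 · cpl x y`. -/
def deltaTD {α : Type*} [DecidableEq α] (x y : List α) : ℤ :=
  (x.length : ℤ) + y.length - 2 * cpl x y

/-- The hash cascade. -/
def hc {b : ℕ} (h : BitVec b → BitVec b) : BitVec b → List (BitVec b) → List (BitVec b)
  | _, [] => []
  | k, a :: as => h (k ^^^ a) :: hc h (h (k ^^^ a)) as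

lemma hc_length {b : ℕ} (h : BitVec b → BitVec b) :
    ∀ (k : BitVec b) (l : List (BitVec b)), (hc h k l).length = l.length
  | _, [] => rfl
  | k, a :: as => by simp [hc, hc_length h (h (k ^^^ a)) as]

lemma cpl_hc {b : ℕ} (h : BitVec b → BitVec b) (hinj : Function.Injective h) :
    ∀ (k : BitVec b) (x y : List (BitVec b)), cpl (hc h k x) (hc h k y) = cpl x y
  | _, [], [] => rfl
  | _, [], _ :: _ => rfl
  | _, _ :: _, [] => rfl
  | k, a :: as, c :: cs => by
    by_cases hac : a = c
    · subst hac
      simp [hc, cpl, cpl_hc h hinj (h (k ^^^ a)) as cs]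
    · have : h (k ^^^ a) ≠ h (k ^^^ c) := by
        intro he
        have := hinj he
        exact hac (by
          have h2 : k ^^^ (k ^^^ a) = k ^^^ (k ^^^ c) := by rw [this]
          simpa [← BitVec.xor_assoc] using h2)
      simp [hc, cpl, this, hac]

lemma cpl_append_le {α : Type*} [DecidableEq α] :
    ∀ (x t c : List α), cpl (x ++ t) c ≤ x.length → cpl x c = cpl (x ++ t) c
  | [], t, c, hle => by
    simp [cpl] at hle ⊢
    omega
  | a :: as, t, [], _ => rfl
  | a :: as, t, c :: cs, hle => by
    by_cases hac : a = c
    · subst hac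
      simp [cpl, List.cons_append] at hle ⊢
      exact cpl_append_le as t cs (by omega)
    · simp [cpl, List.cons_append, hac]

/-- For an injective `h`, a coordinate `x` with `|x| < L`, a padded coordinate `x'` of `x`,
and the return address `y = hc k̃ x'`: for every coordinate `c` with `cpl x' c ≤ |x|` the
diversity measure satisfies `δ_TD(y, hc k̃ c) = δ_TD(x, c) + (L - |x|)`; consequently,
over any finite nonempty set `C` of such coordinates, the minimizers of
`c ↦ δ_TD(y, hc k̃ c)` are exactly the minimizers of `c ↦ δ_TD(x, c)`:
the return address is route preserving with respect to `δ_TD`. -/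
theorem return_address_route_preserving_TD {b L : ℕ}
    (h : BitVec b → BitVec b) (hinj : Function.Injective h) (k : BitVec b)
    (x x' : List (BitVec b)) (hlen : x.length < L) (hpre : x <+: x')
    (hplen : x'.length = L) :
    (∀ c : List (BitVec b), cpl x' c ≤ x.length →
      deltaTD (hc h k x') (hc h k c) = deltaTD x c + ((L : ℤ) - x.length)) ∧
    (∀ C : Finset (List (BitVec b)), C.Nonempty →
      (∀ c ∈ C, cpl x' c ≤ x.length) →
      {c ∈ (C : Set (List (BitVec b))) |
          ∀ c' ∈ C, deltaTD (hc h k x') (hc h k c) ≤ deltaTD (hc h k x') (hc h k c')} =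
      {c ∈ (C : Set (List (BitVec b))) | ∀ c' ∈ C, deltaTD x c ≤ deltaTD x c'}) := by
  obtain ⟨t, rfl⟩ := hpre
  have key : ∀ c : List (BitVec b), cpl (x ++ t) c ≤ x.length →
      deltaTD (hc h k (x ++ t)) (hc h k c) = deltaTD x c + ((L : ℤ) - x.length) := by
    intro c hc'
    have h1 := hc_length h k (x ++ t)
    have h2 := hc_length h k c
    have h3 := cpl_hc h hinj k (x ++ t) c
    have h4 := cpl_append_le x t c hc'
    simp only [deltaTD, h1, h2, h3, ← h4, hplen]
    push_cast
    ring
  refine ⟨key, fun C _ hC => ?_⟩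
  ext c
  simp only [Set.mem_setOf_eq, and_congr_right_iff]
  intro hcC
  constructor <;> intro hmin c' hc'C <;>
    have := hmin c' hc'C
  · rw [key c (hC c hcC), key c' (hC c' hc'C)] at this; omega
  · rw [key c (hC c hcC), key c' (hC c' hc'C)]; omega
end

section
/- Let e, c1, c2 be coordinates with |e| < L, |c1| < L and |c2| < L. If δ_TD(c2, e) < δ_TD(c1, e) and δ_CPL(c2, e) ≥ δ_CPL(c1, e), then cpl(c2, e) < cpl(c1, e) and |c2| < |c1|. (This is the key step showing that any routing step that decreases the tree distance δ_TD but does not decrease δ_CPL must strictly decrease both the common prefix length with the destination and the coordinate length.) -/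
/-- The common-prefix-length based distance. -/
def deltaCPL {α : Type*} [DecidableEq α] (L : ℕ) (x y : List α) : ℚ :=
  if x = y then 0
  else (L : ℚ) - cpl x y - 1 / ((x.length : ℚ) + y.length + 1)

lemma cpl_le_left {α : Type*} [DecidableEq α] : ∀ x y : List α, cpl x y ≤ x.length
  | [], _ => by simp [cpl]
  | _ :: _, [] => by simp [cpl]
  | a :: as, b :: bs => by
    by_cases h : a = b <;> simp [cpl, h]
    exact cpl_le_left as bs

lemma cpl_le_right {α : Type*} [DecidableEq α] : ∀ x y : List α, cpl x y ≤ y.length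
  | [], _ => by simp [cpl]
  | _ :: _, [] => by simp [cpl]
  | a :: as, b :: bs => by
    by_cases h : a = b <;> simp [cpl, h]
    exact cpl_le_right as bs

lemma cpl_self {α : Type*} [DecidableEq α] : ∀ x : List α, cpl x x = x.length
  | [] => by simp [cpl]
  | a :: as => by simp [cpl, cpl_self as]

/-- If a routing step decreases the tree distance `δ_TD` to the destination `e` but does
not decrease `δ_CPL`, then it strictly decreases both the common prefix length with `e`
and the coordinate length. -/
theorem TD_not_CPL_step {α : Type*} [DecidableEq α] (L : ℕ) (e c1 c2 : List α)
    (he : e.length < L) (hc1 : c1.length < L) (hc2 : c2.length < L)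
    (hTD : deltaTD c2 e < deltaTD c1 e)
    (hCPL : deltaCPL L c1 e ≤ deltaCPL L c2 e) :
    cpl c2 e < cpl c1 e ∧ c2.length < c1.length := by
  have hc1e : c1 ≠ e := by
    rintro rfl
    have h1 : deltaTD c1 c1 = 0 := by simp [deltaTD, cpl_self]; ring
    have h2 : (0 : ℤ) ≤ deltaTD c2 c1 := by
      have := cpl_le_left c2 c1
      have := cpl_le_right c2 c1
      simp only [deltaTD]
      push_cast
      omega
    omega
  have hs1pos : (0 : ℚ) < (c1.length : ℚ) + e.length + 1 := by positivity
  have hs1 : 1 ≤ c1.length + e.length := by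
    rcases c1 with _ | ⟨a, as⟩
    · rcases e with _ | ⟨b, bs⟩
      · exact absurd rfl hc1e
      · simp
    · simp; omega
  have hcpl1 : cpl c1 e < L := lt_of_le_of_lt (cpl_le_right c1 e) he
  have hpos1 : (0 : ℚ) < deltaCPL L c1 e := by
    rw [deltaCPL, if_neg hc1e]
    have h1 : 1 / ((c1.length : ℚ) + e.length + 1) ≤ 1 / 2 := by
      apply div_le_div_of_nonneg_left (by norm_num) (by norm_num)
      have : (1 : ℚ) ≤ (c1.length : ℚ) + e.length := by exact_mod_cast hs1
      linarith
    have h2 : (cpl c1 e : ℚ) + 1 ≤ L := by exact_mod_cast hcpl1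
    linarith
  have hc2e : c2 ≠ e := by
    rintro rfl
    have hz : deltaCPL L c2 c2 = 0 := by simp [deltaCPL]
    rw [hz] at hCPL
    linarith
  have hs2pos : (0 : ℚ) < (c2.length : ℚ) + e.length + 1 := by positivity
  rw [deltaCPL, if_neg hc1e, deltaCPL, if_neg hc2e] at hCPL
  have hkey : (cpl c2 e : ℚ) + 1 / ((c2.length : ℚ) + e.length + 1)
      ≤ (cpl c1 e : ℚ) + 1 / ((c1.length : ℚ) + e.length + 1) := by linarith
  have hf2pos : (0 : ℚ) < 1 / ((c2.length : ℚ) + e.length + 1) := by positivity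
  have hf1le : 1 / ((c1.length : ℚ) + e.length + 1) ≤ 1 := by
    rw [div_le_one hs1pos]
    have : (0:ℚ) ≤ (c1.length : ℚ) + e.length := by positivity
    linarith
  have hle : cpl c2 e ≤ cpl c1 e := by
    have : (cpl c2 e : ℚ) < (cpl c1 e : ℚ) + 1 := by linarith
    exact_mod_cast Nat.lt_add_one_iff.mp (by exact_mod_cast this)
  have hTD' : c2.length + e.length + 2 * cpl c1 e < c1.length + e.length + 2 * cpl c2 e := by
    simp only [deltaTD] at hTD
    have := cpl_le_left c2 e
    have := cpl_le_left c1 e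
    push_cast at hTD
    omega
  have hlt : cpl c2 e < cpl c1 e := by
    rcases lt_or_eq_of_le hle with h | h
    · exact h
    · exfalso
      rw [h] at hkey
      have hfle : 1 / ((c2.length : ℚ) + e.length + 1)
          ≤ 1 / ((c1.length : ℚ) + e.length + 1) := by linarith
      have : (c1.length : ℚ) + e.length + 1 ≤ (c2.length : ℚ) + e.length + 1 :=
        le_of_one_div_le_one_div hs2pos hfle
      have h12 : c1.length ≤ c2.length := by exact_mod_cast (by linarith : (c1.length : ℚ) ≤ c2.length)
      omega
  exact ⟨hlt, by omega⟩
end
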